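/- In a non-symmetric unital operad O, the bracket [f,g] := f ∘ g − (-1)^{(n-1)(m-1)} g ∘ f (where ∘ is the circle product built from the partial compositions) defines a graded Lie bracket of degree −1 on ⊕_{n≥1} O^n: it is graded antisymmetric with respect to the shifted degrees and satisfies the graded Jacobi identity. -/

import Mathlib

open Finset

/-- A non-symmetric unital operad in `k`-modules, presented with an ambient module `A`
whose graded pieces `piece n` play the role of `O^n`, partial compositions
`comp f g i` (denoted `f ∘ᵢ g`, declared to vanish for out-of-range data), and a unit. -/
structure NSOperad (k A : Type) [CommRing k] [AddCommGroup A] [Module k A] where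
  piece : ℕ → Submodule k A
  comp : A → A → ℕ → A
  one : A
  one_mem : one ∈ piece 1
  comp_mem : ∀ {n m : ℕ} {f g : A}, f ∈ piece n → g ∈ piece m → ∀ i : ℕ,
      comp f g i ∈ piece (n + m - 1)
  comp_add_left : ∀ (f f' g : A) (i : ℕ), comp (f + f') g i = comp f g i + comp f' g i
  comp_add_right : ∀ (f g g' : A) (i : ℕ), comp f (g + g') i = comp f g i + comp f g' i
  comp_smul_left : ∀ (c : k) (f g : A) (i : ℕ), comp (c • f) g i = c • comp f g i
  comp_smul_right : ∀ (c : k) (f g : A) (i : ℕ), comp f (c • g) i = c • comp f g i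
  comp_out_of_range : ∀ {n : ℕ} {f : A}, f ∈ piece n → ∀ (g : A) (i : ℕ),
      (n < i ∨ n = 0) → comp f g i = 0
  assoc₁ : ∀ {n m p : ℕ} {f g h : A}, f ∈ piece n → g ∈ piece m → h ∈ piece p →
      ∀ i j : ℕ, 1 ≤ j → j < i → i ≤ n →
      comp (comp f g i) h j = comp (comp f h j) g (i + p - 1)
  assoc₂ : ∀ {n m p : ℕ} {f g h : A}, f ∈ piece n → g ∈ piece m → h ∈ piece p →
      ∀ i j : ℕ, 1 ≤ i → i ≤ j → j < m + i →
      comp (comp f g i) h j = comp f (comp g h (j - i + 1)) i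
  assoc₃ : ∀ {n m p : ℕ} {f g h : A}, f ∈ piece n → g ∈ piece m → h ∈ piece p →
      ∀ i j : ℕ, 1 ≤ i → m + i ≤ j → j ≤ n + m - 1 →
      comp (comp f g i) h j = comp (comp f h (j - m + 1)) g i
  unit_right : ∀ {n : ℕ} {f : A}, f ∈ piece n → ∀ i : ℕ, 1 ≤ i → i ≤ n → comp f one i = f
  unit_left : ∀ f : A, comp one f 1 = f

variable {k A : Type} [CommRing k] [AddCommGroup A] [Module k A]

/-- The circle product `f ∘ g = ∑_{i=1}^n (-1)^{(i-1)(m-1)} f ∘ᵢ g` for `f ∈ O^n`, `g ∈ O^m`.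
(The sign exponent `(i+1)*(m+1)` has the same parity as `(i-1)(m-1)`.) -/
def NSOperad.circle (O : NSOperad k A) (n m : ℕ) (f g : A) : A :=
  ∑ i ∈ Finset.Icc 1 n, ((-1 : ℤ) ^ ((i + 1) * (m + 1))) • O.comp f g i

/-- The degree `-1` bracket `[f,g] = f ∘ g - (-1)^{(n-1)(m-1)} g ∘ f` for `f ∈ O^n`, `g ∈ O^m`. -/
def NSOperad.bracket (O : NSOperad k A) (n m : ℕ) (f g : A) : A :=
  O.circle n m f g - ((-1 : ℤ) ^ ((n + 1) * (m + 1))) • O.circle m n g f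

namespace NSOperad
variable (O : NSOperad k A)

/-- `comp` in the first variable, as an additive map. -/
def leftHom (g : A) (i : ℕ) : A →+ A :=
  AddMonoidHom.mk' (fun x => O.comp x g i) (fun a b => O.comp_add_left a b g i)

/-- `comp` in the second variable, as an additive map. -/
def rightHom (f : A) (i : ℕ) : A →+ A :=
  AddMonoidHom.mk' (fun x => O.comp f x i) (fun a b => O.comp_add_right f a b i)

lemma comp_zsmul_left (z : ℤ) (f g : A) (i : ℕ) : O.comp (z • f) g i = z • O.comp f g i :=
  map_zsmul (O.leftHom g i) z f
lemma comp_zsmul_right (z : ℤ) (f g : A) (i : ℕ) : O.comp f (z • g) i = z • O.comp f g i :=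
  map_zsmul (O.rightHom f i) z g
lemma comp_sub_left (f f' g : A) (i : ℕ) : O.comp (f - f') g i = O.comp f g i - O.comp f' g i :=
  map_sub (O.leftHom g i) f f'
lemma comp_sub_right (f g g' : A) (i : ℕ) : O.comp f (g - g') i = O.comp f g i - O.comp f g' i :=
  map_sub (O.rightHom f i) g g'
lemma comp_sum_left {s : Finset ℕ} (F : ℕ → A) (g : A) (i : ℕ) :
    O.comp (∑ x ∈ s, F x) g i = ∑ x ∈ s, O.comp (F x) g i :=
  map_sum (O.leftHom g i) F s
lemma comp_sum_right {s : Finset ℕ} (f : A) (F : ℕ → A) (i : ℕ) :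
    O.comp f (∑ x ∈ s, F x) i = ∑ x ∈ s, O.comp f (F x) i :=
  map_sum (O.rightHom f i) F s

lemma circle_sub_left (n m : ℕ) (x y g : A) :
    O.circle n m (x - y) g = O.circle n m x g - O.circle n m y g := by
  unfold circle
  rw [← Finset.sum_sub_distrib]
  exact Finset.sum_congr rfl fun i _ => by rw [O.comp_sub_left, smul_sub]

lemma circle_zsmul_left (n m : ℕ) (z : ℤ) (x g : A) :
    O.circle n m (z • x) g = z • O.circle n m x g := by
  unfold circle
  rw [Finset.smul_sum]
  exact Finset.sum_congr rfl fun i _ => by rw [O.comp_zsmul_left, smul_comm]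

lemma circle_sub_right (n m : ℕ) (f x y : A) :
    O.circle n m f (x - y) = O.circle n m f x - O.circle n m f y := by
  unfold circle
  rw [← Finset.sum_sub_distrib]
  exact Finset.sum_congr rfl fun i _ => by rw [O.comp_sub_right, smul_sub]

lemma circle_zsmul_right (n m : ℕ) (z : ℤ) (f x : A) :
    O.circle n m f (z • x) = z • O.circle n m f x := by
  unfold circle
  rw [Finset.smul_sum]
  exact Finset.sum_congr rfl fun i _ => by rw [O.comp_zsmul_right, smul_comm]

/-- The associator defect. -/
def assocDef (O : NSOperad k A) (n m p : ℕ) (f g h : A) : A :=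
  O.circle (n+m-1) p (O.circle n m f g) h - O.circle n (m+p-1) f (O.circle m p g h)

lemma circle_decomp (x y z : ℕ) (u v w : A) (d d2 : ℕ) (hd : d = x+y-1) (hd2 : d2 = y+z-1) :
    O.circle d z (O.circle x y u v) w
      = O.assocDef x y z u v w + O.circle x d2 u (O.circle y z v w) := by
  subst hd hd2
  rw [assocDef]
  abel

/-- The canonical expression for the associator defect. -/
def Edef (O : NSOperad k A) (n m p : ℕ) (f g h : A) : A :=
  (∑ v ∈ Icc 1 n, ∑ u ∈ Icc 1 (v-1),
      ((-1:ℤ)^((v+1)*(m+1)+(u+1)*(p+1))) • O.comp (O.comp f h u) g (v+p-1))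
  + ∑ v ∈ Icc 1 n, ∑ u ∈ Icc (v+1) n,
      ((-1:ℤ)^((v+1)*(m+1)+(u+m)*(p+1))) • O.comp (O.comp f h u) g v

end NSOperad

lemma npadd {a b : ℕ} (c : ℕ) (h : a + b = 2*c) : ((-1:ℤ))^a = (-1)^b := by
  have h1 : ((-1:ℤ))^(a+b) = 1 := by
    rw [h, pow_mul]; norm_num
  have h2 : ((-1:ℤ))^a * (-1)^b = 1 := by rw [← pow_add]; exact h1
  have h3 : ((-1:ℤ))^b * (-1)^b = 1 := by
    rw [← pow_add, ← two_mul, pow_mul]; norm_num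
  calc ((-1:ℤ))^a = (-1)^a * ((-1)^b * (-1)^b) := by rw [h3, mul_one]
    _ = ((-1)^a * (-1)^b) * (-1)^b := by ring
    _ = (-1)^b := by rw [h2, one_mul]

lemma tri {M : Type} [AddCommMonoid M] (n : ℕ) (F : ℕ → ℕ → M) :
    ∑ v ∈ Icc 1 n, ∑ u ∈ Icc 1 (v-1), F u v = ∑ v ∈ Icc 1 n, ∑ u ∈ Icc (v+1) n, F v u := by
  rw [Finset.sum_sigma', Finset.sum_sigma']
  refine Finset.sum_nbij' (fun x => ⟨x.2, x.1⟩) (fun x => ⟨x.2, x.1⟩) ?_ ?_ ?_ ?_ ?_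
  · rintro ⟨v, u⟩ hm
    simp only [Finset.mem_sigma, Finset.mem_Icc] at hm ⊢
    omega
  · rintro ⟨v, u⟩ hm
    simp only [Finset.mem_sigma, Finset.mem_Icc] at hm ⊢
    omega
  · rintro ⟨v, u⟩ _; rfl
  · rintro ⟨v, u⟩ _; rfl
  · rintro ⟨v, u⟩ _; rfl

lemma icc_split (n i m : ℕ) (h1 : 1 ≤ i) (h2 : i ≤ n) (hm : 1 ≤ m) {M : Type} [AddCommMonoid M]
    (G : ℕ → M) :
    ∑ j ∈ Icc 1 (n+m-1), G j
      = ∑ j ∈ Icc 1 (i-1), G j + ∑ j ∈ Icc i (i+m-1), G j + ∑ j ∈ Icc (i+m) (n+m-1), G j := by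
  have e1 : Icc 1 (n+m-1) = Ioc 0 (n+m-1) := by rw [← Finset.Icc_add_one_left_eq_Ioc]; rfl
  have e2 : Icc 1 (i-1) = Ioc 0 (i-1) := by rw [← Finset.Icc_add_one_left_eq_Ioc]; rfl
  have e3 : Icc i (i+m-1) = Ioc (i-1) (i+m-1) := by rw [← Finset.Icc_add_one_left_eq_Ioc]; congr 1; omega
  have e4 : Icc (i+m) (n+m-1) = Ioc (i+m-1) (n+m-1) := by rw [← Finset.Icc_add_one_left_eq_Ioc]; congr 1; omega
  rw [e1, e2, e3, e4, Finset.sum_Ioc_consecutive _ (by omega) (by omega),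
    Finset.sum_Ioc_consecutive _ (by omega) (by omega)]

namespace NSOperad
variable {k A : Type} [CommRing k] [AddCommGroup A] [Module k A] (O : NSOperad k A)

lemma assocDef_eq_Edef {n m p : ℕ} {f g h : A}
    (hn : 1 ≤ n) (hm : 1 ≤ m) (hp : 1 ≤ p)
    (hf : f ∈ O.piece n) (hg : g ∈ O.piece m) (hh : h ∈ O.piece p) :
    O.assocDef n m p f g h = O.Edef n m p f g h := by
  have expand : O.circle (n+m-1) p (O.circle n m f g) h
      = ∑ i ∈ Icc 1 n, ∑ j ∈ Icc 1 (n+m-1),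
          ((-1:ℤ)^((j+1)*(p+1)) * (-1:ℤ)^((i+1)*(m+1))) • O.comp (O.comp f g i) h j := by
    calc O.circle (n+m-1) p (O.circle n m f g) h
        = ∑ j ∈ Icc 1 (n+m-1), ((-1:ℤ)^((j+1)*(p+1))) • O.comp (O.circle n m f g) h j := rfl
      _ = ∑ j ∈ Icc 1 (n+m-1), ∑ i ∈ Icc 1 n,
            ((-1:ℤ)^((j+1)*(p+1)) * (-1:ℤ)^((i+1)*(m+1))) • O.comp (O.comp f g i) h j := by
          refine Finset.sum_congr rfl fun j _ => ?_
          rw [NSOperad.circle, O.comp_sum_left, Finset.smul_sum]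
          refine Finset.sum_congr rfl fun i _ => ?_
          rw [O.comp_zsmul_left, smul_smul]
      _ = _ := Finset.sum_comm
  have rhsexp : O.circle n (m+p-1) f (O.circle m p g h)
      = ∑ i ∈ Icc 1 n, ∑ t ∈ Icc 1 m,
          ((-1:ℤ)^((i+1)*(m+p-1+1)) * (-1:ℤ)^((t+1)*(p+1))) • O.comp f (O.comp g h t) i := by
    refine Finset.sum_congr rfl fun i _ => ?_
    rw [NSOperad.circle, O.comp_sum_right, Finset.smul_sum]
    refine Finset.sum_congr rfl fun t _ => ?_
    rw [O.comp_zsmul_right, smul_smul]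
  have splitStep : ∀ i ∈ Icc 1 n,
      ∑ j ∈ Icc 1 (n+m-1),
          ((-1:ℤ)^((j+1)*(p+1)) * (-1:ℤ)^((i+1)*(m+1))) • O.comp (O.comp f g i) h j
      = ((∑ u ∈ Icc 1 (i-1),
            ((-1:ℤ)^((i+1)*(m+1)+(u+1)*(p+1))) • O.comp (O.comp f h u) g (i+p-1))
        + ∑ t ∈ Icc 1 m,
            ((-1:ℤ)^((i+1)*(m+p-1+1)) * (-1:ℤ)^((t+1)*(p+1))) • O.comp f (O.comp g h t) i)
        + ∑ u ∈ Icc (i+1) n,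
            ((-1:ℤ)^((i+1)*(m+1)+(u+m)*(p+1))) • O.comp (O.comp f h u) g i := by
    intro i hi
    simp only [Finset.mem_Icc] at hi
    rw [icc_split n i m hi.1 hi.2 hm]
    congr 1
    · congr 1
      · -- region j < i
        refine Finset.sum_congr rfl fun j hj => ?_
        simp only [Finset.mem_Icc] at hj
        rw [O.assoc₁ hf hg hh i j (by omega) (by omega) (by omega), ← pow_add,
          Nat.add_comm ((j+1)*(p+1)) ((i+1)*(m+1))]
      · -- middle region
        refine (Finset.sum_nbij' (fun t => i + t - 1) (fun j => j - i + 1)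
          ?_ ?_ ?_ ?_ ?_).symm
        · intro t ht; simp only [Finset.mem_Icc] at ht ⊢; omega
        · intro j hj; simp only [Finset.mem_Icc] at hj ⊢; omega
        · intro t ht; simp only [Finset.mem_Icc] at ht; omega
        · intro j hj; simp only [Finset.mem_Icc] at hj; omega
        · intro t ht
          simp only [Finset.mem_Icc] at ht
          rw [O.assoc₂ hf hg hh i (i+t-1) (by omega) (by omega) (by omega),
            show i+t-1-i+1 = t from by omega, ← pow_add, ← pow_add,
            show i+t-1+1 = i+t from by omega, show m+p-1+1 = m+p from by omega,
            show ((-1:ℤ))^((i+1)*(m+p)+(t+1)*(p+1)) = (-1:ℤ)^((i+t)*(p+1)+(i+1)*(m+1))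
              from npadd (m*(i+1)+t*(p+1)+(i+1)*(p+1)) (by ring)]
    · -- region j ≥ i + m
      refine (Finset.sum_nbij' (fun u => u + m - 1) (fun j => j - m + 1)
        ?_ ?_ ?_ ?_ ?_).symm
      · intro u hu; simp only [Finset.mem_Icc] at hu ⊢; omega
      · intro j hj; simp only [Finset.mem_Icc] at hj ⊢; omega
      · intro u hu; simp only [Finset.mem_Icc] at hu; omega
      · intro j hj; simp only [Finset.mem_Icc] at hj; omega
      · intro u hu
        simp only [Finset.mem_Icc] at hu
        rw [O.assoc₃ hf hg hh i (u+m-1) (by omega) (by omega) (by omega),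
          show u+m-1-m+1 = u from by omega, ← pow_add,
          show u+m-1+1 = u+m from by omega,
          Nat.add_comm ((u+m)*(p+1)) ((i+1)*(m+1))]
  rw [NSOperad.assocDef, expand, Finset.sum_congr rfl splitStep,
    Finset.sum_add_distrib, Finset.sum_add_distrib, NSOperad.Edef, rhsexp]
  abel

end NSOperad

namespace NSOperad
variable {k A : Type} [CommRing k] [AddCommGroup A] [Module k A] (O : NSOperad k A)

lemma Edef_swap {n m p : ℕ} {f g h : A}
    (hn : 1 ≤ n) (hm : 1 ≤ m) (hp : 1 ≤ p)
    (hf : f ∈ O.piece n) (hg : g ∈ O.piece m) (hh : h ∈ O.piece p) :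
    O.Edef n p m f h g = ((-1:ℤ)^((m+1)*(p+1))) • O.Edef n m p f g h := by
  have e1 : (∑ v ∈ Icc 1 n, ∑ u ∈ Icc 1 (v-1),
        ((-1:ℤ)^((v+1)*(p+1)+(u+1)*(m+1))) • O.comp (O.comp f g u) h (v+m-1))
      = ∑ v ∈ Icc 1 n, ∑ u ∈ Icc (v+1) n,
        ((-1:ℤ)^((m+1)*(p+1)+((v+1)*(m+1)+(u+m)*(p+1)))) • O.comp (O.comp f h u) g v := by
    calc (∑ v ∈ Icc 1 n, ∑ u ∈ Icc 1 (v-1),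
          ((-1:ℤ)^((v+1)*(p+1)+(u+1)*(m+1))) • O.comp (O.comp f g u) h (v+m-1))
        = ∑ v ∈ Icc 1 n, ∑ u ∈ Icc (v+1) n,
          ((-1:ℤ)^((u+1)*(p+1)+(v+1)*(m+1))) • O.comp (O.comp f g v) h (u+m-1) :=
        tri n (fun u v => ((-1:ℤ)^((v+1)*(p+1)+(u+1)*(m+1))) • O.comp (O.comp f g u) h (v+m-1))
      _ = _ := by
        refine Finset.sum_congr rfl fun v hv => Finset.sum_congr rfl fun u hu => ?_
        simp only [Finset.mem_Icc] at hv hu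
        rw [O.assoc₃ hf hg hh v (u+m-1) (by omega) (by omega) (by omega),
          show u+m-1-m+1 = u from by omega,
          show ((-1:ℤ))^((u+1)*(p+1)+(v+1)*(m+1))
              = (-1:ℤ)^((m+1)*(p+1)+((v+1)*(m+1)+(u+m)*(p+1)))
            from npadd ((v+1)*(m+1)+(p+1)*(u+m+1)) (by ring)]
  have e2 : (∑ v ∈ Icc 1 n, ∑ u ∈ Icc (v+1) n,
        ((-1:ℤ)^((v+1)*(p+1)+(u+p)*(m+1))) • O.comp (O.comp f g u) h v)
      = ∑ v ∈ Icc 1 n, ∑ u ∈ Icc 1 (v-1),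
        ((-1:ℤ)^((m+1)*(p+1)+((v+1)*(m+1)+(u+1)*(p+1)))) • O.comp (O.comp f h u) g (v+p-1) := by
    calc (∑ v ∈ Icc 1 n, ∑ u ∈ Icc (v+1) n,
          ((-1:ℤ)^((v+1)*(p+1)+(u+p)*(m+1))) • O.comp (O.comp f g u) h v)
        = ∑ v ∈ Icc 1 n, ∑ u ∈ Icc 1 (v-1),
          ((-1:ℤ)^((u+1)*(p+1)+(v+p)*(m+1))) • O.comp (O.comp f g v) h u :=
        (tri n (fun u v => ((-1:ℤ)^((u+1)*(p+1)+(v+p)*(m+1))) • O.comp (O.comp f g v) h u)).symm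
      _ = _ := by
        refine Finset.sum_congr rfl fun v hv => Finset.sum_congr rfl fun u hu => ?_
        simp only [Finset.mem_Icc] at hv hu
        rw [O.assoc₁ hf hg hh v u (by omega) (by omega) (by omega),
          show ((-1:ℤ))^((u+1)*(p+1)+(v+p)*(m+1))
              = (-1:ℤ)^((m+1)*(p+1)+((v+1)*(m+1)+(u+1)*(p+1)))
            from npadd ((u+1)*(p+1)+(m+1)*(v+p+1)) (by ring)]
  rw [NSOperad.Edef, NSOperad.Edef, e1, e2, smul_add]
  simp only [Finset.smul_sum, smul_smul, ← pow_add]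
  exact add_comm _ _

lemma assocDef_swap {n m p : ℕ} {f g h : A}
    (hn : 1 ≤ n) (hm : 1 ≤ m) (hp : 1 ≤ p)
    (hf : f ∈ O.piece n) (hg : g ∈ O.piece m) (hh : h ∈ O.piece p) :
    O.assocDef n p m f h g = ((-1:ℤ)^((m+1)*(p+1))) • O.assocDef n m p f g h := by
  rw [O.assocDef_eq_Edef hn hp hm hf hh hg, O.Edef_swap hn hm hp hf hg hh,
    ← O.assocDef_eq_Edef hn hm hp hf hg hh]

end NSOperad

lemma sqmo (a : ℤ) (ha : a * a = 1) : a = 1 ∨ a = -1 :=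
  Int.isUnit_iff.mp (IsUnit.of_mul_eq_one a ha)

lemma final_comb (a b c g1 e2 e3 s1 s2 s3 : ℤ)
    (ha : a*a = 1) (hb : b*b = 1) (hc : c*c = 1)
    (hg1 : g1 = c) (he2 : e2 = a) (he3 : e3 = b)
    (hs1 : s1 = c*b) (hs2 : s2 = a*c) (hs3 : s3 = a*b)
    (R1 R2 R3 R4 R5 R6 D1 D2 D3 : A) :
    c • ((D1 + R1) - a • (g1 • D2 + R3) - s1 • (R5 - a • R6))
    + e2 • ((D2 + R4) - b • (a • D3 + R6) - s2 • (R1 - b • R2))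
    + e3 • ((D3 + R5) - g1 • (b • D1 + R2) - s3 • (R4 - g1 • R3)) = 0 := by
  rw [hg1, he2, he3, hs1, hs2, hs3]
  obtain rfl | rfl := sqmo a ha <;>
  obtain rfl | rfl := sqmo b hb <;>
  obtain rfl | rfl := sqmo c hc <;>
  · norm_num
    try module
    try abel

/-- on `⊕_{n ≥ 1} O^n` the bracket `[f,g]` is graded antisymmetric for the
shifted degrees and satisfies the graded Jacobi identity, i.e. it is a graded Lie bracket
of degree `-1`. -/
theorem bracket_gradedLie (O : NSOperad k A) {n m p : ℕ} {f g h : A}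
    (hn : 1 ≤ n) (hm : 1 ≤ m) (hp : 1 ≤ p)
    (hf : f ∈ O.piece n) (hg : g ∈ O.piece m) (hh : h ∈ O.piece p) :
    (O.bracket n m f g = -(((-1 : ℤ) ^ ((n + 1) * (m + 1))) • O.bracket m n g f)) ∧
    (((-1 : ℤ) ^ ((n + 1) * (p + 1))) • O.bracket (n + m - 1) p (O.bracket n m f g) h
      + ((-1 : ℤ) ^ ((m + 1) * (n + 1))) • O.bracket (m + p - 1) n (O.bracket m p g h) f
      + ((-1 : ℤ) ^ ((p + 1) * (m + 1))) • O.bracket (p + n - 1) m (O.bracket p n h f) g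
      = 0) := by
  have sq : ∀ e : ℕ, ((-1:ℤ))^e * (-1)^e = 1 := fun e => by
    rw [← pow_add, ← two_mul, pow_mul]; norm_num
  constructor
  · rw [NSOperad.bracket, NSOperad.bracket, smul_sub, neg_sub, smul_smul,
      Nat.mul_comm (m+1) (n+1), sq, one_smul]
  · rw [show p + n - 1 = n + p - 1 from by omega]
    simp only [NSOperad.bracket]
    simp only [O.circle_sub_left, O.circle_zsmul_left, O.circle_sub_right,
      O.circle_zsmul_right]
    rw [O.circle_decomp n m p f g h (n+m-1) (m+p-1) rfl rfl,
      O.circle_decomp m n p g f h (n+m-1) (n+p-1) (by omega) (by omega),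
      O.circle_decomp m p n g h f (m+p-1) (n+p-1) rfl (by omega),
      O.circle_decomp p m n h g f (m+p-1) (n+m-1) (by omega) (by omega),
      O.circle_decomp p n m h f g (n+p-1) (n+m-1) (by omega) rfl,
      O.circle_decomp n p m f h g (n+p-1) (m+p-1) rfl (by omega),
      O.assocDef_swap hm hp hn hg hh hf,
      O.assocDef_swap hp hn hm hh hf hg,
      O.assocDef_swap hn hm hp hf hg hh]
    exact final_comb ((-1:ℤ)^((n+1)*(m+1))) ((-1:ℤ)^((m+1)*(p+1))) ((-1:ℤ)^((n+1)*(p+1)))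
      ((-1:ℤ)^((p+1)*(n+1))) ((-1:ℤ)^((m+1)*(n+1))) ((-1:ℤ)^((p+1)*(m+1)))
      ((-1:ℤ)^((n+m-1+1)*(p+1))) ((-1:ℤ)^((m+p-1+1)*(n+1))) ((-1:ℤ)^((n+p-1+1)*(m+1)))
      (sq _) (sq _) (sq _)
      (by rw [Nat.mul_comm]) (by rw [Nat.mul_comm]) (by rw [Nat.mul_comm])
      (by rw [← pow_add, show n+m-1+1 = n+m from by omega];
          exact npadd ((n+m+1)*(p+1)) (by ring))
      (by rw [← pow_add, show m+p-1+1 = m+p from by omega];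
          exact npadd ((n+1)*(m+p+1)) (by ring))
      (by rw [← pow_add, show n+p-1+1 = n+p from by omega];
          exact npadd ((m+1)*(n+p+1)) (by ring))
      (O.circle n (m+p-1) f (O.circle m p g h))
      (O.circle n (m+p-1) f (O.circle p m h g))
      (O.circle m (n+p-1) g (O.circle n p f h))
      (O.circle m (n+p-1) g (O.circle p n h f))
      (O.circle p (n+m-1) h (O.circle n m f g))
      (O.circle p (n+m-1) h (O.circle m n g f))
      (O.assocDef n m p f g h) (O.assocDef m p n g h f) (O.assocDef p n m h f g)
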